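/- The optimal value of problem (P1) with the groupput state throughput T_w = ν_w·c_w equals the optimal value of problem (P2); that is, the supremum of Σ_{w∈W} π_w ν_w c_w over all distributions π feasible for (P1) equals the supremum of Σ_i α_i over all (α,β) feasible for (P2). -/

import Mathlib

open Finset

inductive NodeState : Type
  | s | l | x
deriving DecidableEq

instance : Fintype NodeState :=
  ⟨{NodeState.s, NodeState.l, NodeState.x}, by intro a; cases a <;> simp⟩

abbrev NetState (N : ℕ) := Fin N → NodeState

/-- Number of nodes in transmit state. -/
def numTransmit {N : ℕ} (w : NetState N) : ℕ :=
  (univ.filter fun i => w i = NodeState.x).card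

/-- Number of nodes in listen state (`c_w`). -/
def numListen {N : ℕ} (w : NetState N) : ℕ :=
  (univ.filter fun i => w i = NodeState.l).card

/-- The (finite) set `W` of collision-free network states. -/
def CF (N : ℕ) : Finset (NetState N) :=
  univ.filter fun w => numTransmit w ≤ 1

/-- Indicator `ν_w` that exactly one node is transmitting. -/
def nu {N : ℕ} (w : NetState N) : ℝ := if numTransmit w = 1 then 1 else 0

/-- A probability distribution on `W`, feasible for problem (P1):
nonnegative, supported on `W`, sums to 1, and each node's average power
consumption is within its budget. -/
def P1Feasible (N : ℕ) (L X ρ : Fin N → ℝ) (π : NetState N → ℝ) : Prop :=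
  (∀ w, 0 ≤ π w) ∧ (∀ w ∉ CF N, π w = 0) ∧ (∑ w ∈ CF N, π w = 1) ∧
  (∀ i, (∑ w ∈ (CF N).filter (fun w => w i = NodeState.l), π w) * L i
      + (∑ w ∈ (CF N).filter (fun w => w i = NodeState.x), π w) * X i ≤ ρ i)

/-- Feasibility for problem (P2). -/
def P2Feasible (N : ℕ) (L X ρ : Fin N → ℝ) (α β : Fin N → ℝ) : Prop :=
  (∀ i, α i ∈ Set.Icc (0 : ℝ) 1) ∧ (∀ i, β i ∈ Set.Icc (0 : ℝ) 1) ∧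
  (∀ i, α i * L i + β i * X i ≤ ρ i) ∧
  (∀ i, α i + β i ≤ 1) ∧ (∑ i, β i ≤ 1) ∧
  (∀ i, α i ≤ ∑ j ∈ univ.erase i, β j)

lemma mem_CF {N : ℕ} (w : NetState N) : w ∈ CF N ↔ numTransmit w ≤ 1 := by
  simp [CF]

lemma swap_helper {N : ℕ} (π : NetState N → ℝ) (s : Finset (Fin N))
    (P : Fin N → NetState N → Prop) [∀ i w, Decidable (P i w)] :
    ∑ i ∈ s, ∑ w ∈ (CF N).filter (fun w => P i w), π w
      = ∑ w ∈ CF N, π w * ∑ i ∈ s, (if P i w then (1:ℝ) else 0) := by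
  simp_rw [Finset.sum_filter, Finset.mul_sum, mul_ite, mul_one, mul_zero]
  exact Finset.sum_comm

lemma numListen_cast {N : ℕ} (w : NetState N) :
    ((numListen w : ℝ)) = ∑ i, if w i = NodeState.l then (1:ℝ) else 0 := by
  rw [numListen, Finset.card_filter]
  push_cast [apply_ite]
  rfl

lemma numTransmit_cast {N : ℕ} (w : NetState N) :
    ((numTransmit w : ℝ)) = ∑ i, if w i = NodeState.x then (1:ℝ) else 0 := by
  rw [numTransmit, Finset.card_filter]
  push_cast [apply_ite]
  rfl


lemma sum_nodeState (f : NodeState → ℝ) : ∑ a, f a = f .s + f .l + f .x := by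
  rw [show (univ : Finset NodeState) = {NodeState.s, NodeState.l, NodeState.x} from by decide]
  simp [Finset.sum_insert, Finset.mem_insert]
  ring

lemma sum_prod' {N : ℕ} (F : Fin N → NodeState → ℝ) :
    ∑ w : NetState N, ∏ i, F i (w i) = ∏ i, (F i .s + F i .l + F i .x) := by
  rw [show (∏ i, (F i .s + F i .l + F i .x)) = ∏ i, ∑ a, F i a from
    Finset.prod_congr rfl fun i _ => (sum_nodeState (F i)).symm]
  rw [Finset.prod_univ_sum, Fintype.piFinset_univ]

lemma cond_mul_prod {N : ℕ} (F : Fin N → NodeState → ℝ) (i : Fin N) (c : NodeState → ℝ)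
    (w : NetState N) :
    c (w i) * ∏ i', F i' (w i') =
      ∏ i', Function.update F i (fun a => c a * F i a) i' (w i') := by
  rw [← Finset.mul_prod_erase univ (fun i' => F i' (w i')) (mem_univ i),
      ← Finset.mul_prod_erase univ
        (fun i' => Function.update F i (fun a => c a * F i a) i' (w i')) (mem_univ i)]
  simp only [Function.update_self, ← mul_assoc]
  congr 1
  refine Finset.prod_congr rfl fun j hj => ?_
  rw [Function.update_of_ne (Finset.ne_of_mem_erase hj)]

lemma sum_cond_mul_prod {N : ℕ} (F : Fin N → NodeState → ℝ) (i : Fin N) (c : NodeState → ℝ)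
    (hF : ∀ i', F i' .s + F i' .l + F i' .x = 1) :
    ∑ w : NetState N, c (w i) * ∏ i', F i' (w i')
      = c .s * F i .s + c .l * F i .l + c .x * F i .x := by
  rw [Finset.sum_congr rfl fun w _ => cond_mul_prod F i c w, sum_prod']
  rw [Finset.prod_eq_single_of_mem i (mem_univ i)
    (fun b _ hb => by rw [Function.update_of_ne hb]; exact hF b)]
  rw [Function.update_self]


lemma P1_to_P2 {N : ℕ} (L X ρ : Fin N → ℝ) (hL : ∀ i, 0 < L i) (hX : ∀ i, 0 < X i)
    (π : NetState N → ℝ) (h : P1Feasible N L X ρ π) :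
    ∃ α β : Fin N → ℝ, P2Feasible N L X ρ α β ∧
      ∑ w ∈ CF N, π w * (nu w * (numListen w : ℝ)) = ∑ i, α i := by
  obtain ⟨hpos, hsupp, hsum, hpow⟩ := h
  set α : Fin N → ℝ := fun i =>
    ∑ w ∈ (CF N).filter (fun w => w i = NodeState.l ∧ numTransmit w = 1), π w with hα
  set β : Fin N → ℝ := fun i =>
    ∑ w ∈ (CF N).filter (fun w => w i = NodeState.x), π w with hβ
  have sub_le : ∀ (s : Finset (NetState N)), s ⊆ CF N → ∑ w ∈ s, π w ≤ 1 := by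
    intro s hs
    rw [← hsum]
    exact Finset.sum_le_sum_of_subset_of_nonneg hs (fun w _ _ => hpos w)
  have hα0 : ∀ i, 0 ≤ α i := fun i => Finset.sum_nonneg fun w _ => hpos w
  have hβ0 : ∀ i, 0 ≤ β i := fun i => Finset.sum_nonneg fun w _ => hpos w
  have hα1 : ∀ i, α i ≤ 1 := fun i => sub_le _ (Finset.filter_subset _ _)
  have hβ1 : ∀ i, β i ≤ 1 := fun i => sub_le _ (Finset.filter_subset _ _)
  refine ⟨α, β, ⟨fun i => ⟨hα0 i, hα1 i⟩, fun i => ⟨hβ0 i, hβ1 i⟩, ?_, ?_, ?_, ?_⟩, ?_⟩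
  · -- power
    intro i
    refine le_trans ?_ (hpow i)
    have hαle : α i ≤ ∑ w ∈ (CF N).filter (fun w => w i = NodeState.l), π w := by
      refine Finset.sum_le_sum_of_subset_of_nonneg ?_ (fun w _ _ => hpos w)
      intro w hw
      simp only [Finset.mem_filter] at hw ⊢
      exact ⟨hw.1, hw.2.1⟩
    have := mul_le_mul_of_nonneg_right hαle (hL i).le
    linarith
  · -- α i + β i ≤ 1
    intro i
    have hdisj : Disjoint ((CF N).filter (fun w => w i = NodeState.l ∧ numTransmit w = 1))
        ((CF N).filter (fun w => w i = NodeState.x)) := by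
      rw [Finset.disjoint_left]
      intro w h1 h2
      simp only [Finset.mem_filter] at h1 h2
      rw [h1.2.1] at h2
      exact absurd h2.2 (by simp)
    calc α i + β i = ∑ w ∈ _ ∪ _, π w := (Finset.sum_union hdisj).symm
      _ ≤ 1 := sub_le _ (Finset.union_subset (Finset.filter_subset _ _)
          (Finset.filter_subset _ _))
  · -- ∑ β ≤ 1
    calc ∑ i, β i = ∑ w ∈ CF N, π w * ∑ i, (if w i = NodeState.x then (1:ℝ) else 0) := by
          simp only [hβ]; exact swap_helper π univ (fun i w => w i = NodeState.x)
      _ ≤ ∑ w ∈ CF N, π w := by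
          refine Finset.sum_le_sum fun w hw => ?_
          rw [← numTransmit_cast]
          have h2 : (numTransmit w : ℝ) ≤ 1 := by
            rw [mem_CF] at hw; exact_mod_cast hw
          nlinarith [hpos w]
      _ = 1 := hsum
  · -- α i ≤ ∑_{j ≠ i} β j
    intro i
    have hrhs : ∑ j ∈ univ.erase i, β j
        = ∑ w ∈ CF N, π w * ∑ j ∈ univ.erase i, (if w j = NodeState.x then (1:ℝ) else 0) := by
      simp only [hβ]; exact swap_helper π (univ.erase i) (fun j w => w j = NodeState.x)
    rw [hrhs]
    simp only [hα, Finset.sum_filter]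
    refine Finset.sum_le_sum fun w hw => ?_
    by_cases hc : w i = NodeState.l ∧ numTransmit w = 1
    · simp only [if_pos hc]
      have : ∃ t, t ∈ univ.erase i ∧ w t = NodeState.x := by
        have h1 : (univ.filter fun j => w j = NodeState.x).card = 1 := hc.2
        obtain ⟨t, ht⟩ := Finset.card_eq_one.mp h1
        have htx : w t = NodeState.x := by
          have : t ∈ univ.filter fun j => w j = NodeState.x := ht ▸ Finset.mem_singleton_self t
          simpa using this
        refine ⟨t, Finset.mem_erase.mpr ⟨?_, Finset.mem_univ t⟩, htx⟩
        rintro rfl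
        rw [hc.1] at htx
        exact absurd htx (by simp)
      obtain ⟨t, ht, htx⟩ := this
      have : (1:ℝ) ≤ ∑ j ∈ univ.erase i, (if w j = NodeState.x then (1:ℝ) else 0) := by
        have := Finset.single_le_sum (f := fun j => if w j = NodeState.x then (1:ℝ) else 0)
          (fun j _ => by positivity) ht
        simpa [htx] using this
      nlinarith [hpos w]
    · simp only [if_neg hc]
      refine mul_nonneg (hpos w) (Finset.sum_nonneg fun j _ => by positivity)
  · -- value
    have hrhs : ∑ i, α i
        = ∑ w ∈ CF N, π w * ∑ i, (if (w i = NodeState.l ∧ numTransmit w = 1) then (1:ℝ) else 0) := by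
      simp only [hα]
      exact swap_helper π univ (fun i w => w i = NodeState.l ∧ numTransmit w = 1)
    rw [hrhs]
    refine Finset.sum_congr rfl fun w hw => ?_
    congr 1
    by_cases hnt : numTransmit w = 1
    · rw [nu, if_pos hnt, one_mul, numListen_cast]
      exact Finset.sum_congr rfl fun i _ => by simp [hnt]
    · simp [nu, hnt]

lemma P2_to_P1 {N : ℕ} (hN : 2 ≤ N) (L X ρ : Fin N → ℝ) (α β : Fin N → ℝ)
    (h : P2Feasible N L X ρ α β) :
    ∃ π : NetState N → ℝ, P1Feasible N L X ρ π ∧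
      ∑ w ∈ CF N, π w * (nu w * (numListen w : ℝ)) = ∑ i, α i := by
  obtain ⟨hα01, hβ01, hpow, hαβ, hβsum, hαD⟩ := h
  set D : Fin N → ℝ := fun i => ∑ j ∈ univ.erase i, β j with hD
  have hD0 : ∀ i, 0 ≤ D i := fun i => Finset.sum_nonneg fun j _ => (hβ01 j).1
  set p : Fin N → ℝ := fun i => if D i = 0 then 0 else α i / D i with hp
  have hp0 : ∀ i, 0 ≤ p i := by
    intro i; rw [hp]; dsimp only
    split
    · exact le_refl 0
    · exact div_nonneg (hα01 i).1 (hD0 i)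
  have hp1 : ∀ i, p i ≤ 1 := by
    intro i; rw [hp]; dsimp only
    split
    · exact zero_le_one
    · rename_i hne
      rw [div_le_one (lt_of_le_of_ne (hD0 i) (Ne.symm hne))]
      exact hαD i
  have hpD : ∀ i, p i * D i = α i := by
    intro i; rw [hp]; dsimp only
    split
    · rename_i h0
      rw [zero_mul]
      have h1 := hαD i
      simp only [hD] at h0
      linarith [(hα01 i).1]
    · rename_i hne
      field_simp
  set g : Fin N → NodeState → ℝ := fun i a =>
    if a = NodeState.s then 1 - p i else if a = NodeState.l then p i else 0 with hg
  set F : Fin N → Fin N → NodeState → ℝ := fun j i a =>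
    if i = j then (if a = NodeState.x then 1 else 0) else g i a with hF
  set sInd : NodeState → ℝ := fun a => if a = NodeState.s then 1 else 0 with hsInd
  set π : NetState N → ℝ := fun w =>
    (∏ i, sInd (w i)) * (1 - ∑ j, β j) + ∑ j, β j * ∏ i, F j i (w i) with hπ
  have hsIndsum : ∀ i' : Fin N, (fun (_ : Fin N) => sInd) i' .s + (fun _ => sInd) i' .l
      + (fun _ => sInd) i' .x = 1 := by
    intro i'; simp [hsInd]
  have hFsum : ∀ j i', F j i' .s + F j i' .l + F j i' .x = 1 := by
    intro j i'
    by_cases hij : i' = j <;> simp [hF, hg, hij]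
  have hF0 : ∀ j i' a, 0 ≤ F j i' a := by
    intro j i' a
    by_cases hij : i' = j
    · simp only [hF, hg, if_pos hij]; split <;> norm_num
    · simp only [hF, hg, if_neg hij]
      split
      · linarith [hp1 i']
      · split
        · exact hp0 i'
        · exact le_refl 0
  have hs0 : ∀ a, 0 ≤ sInd a := by intro a; rw [hsInd]; dsimp only; split <;> norm_num
  have hπ0 : ∀ w, 0 ≤ π w := by
    intro w
    rw [hπ]; dsimp only
    have h1 : (0:ℝ) ≤ (∏ i, sInd (w i)) * (1 - ∑ j, β j) :=
      mul_nonneg (Finset.prod_nonneg fun i _ => hs0 _) (by linarith)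
    have h2 : (0:ℝ) ≤ ∑ j, β j * ∏ i, F j i (w i) :=
      Finset.sum_nonneg fun j _ => mul_nonneg (hβ01 j).1 (Finset.prod_nonneg fun i _ => hF0 _ _ _)
    linarith
  have hπzero : ∀ w : NetState N, numTransmit w ≠ 1 → (∃ i, w i ≠ NodeState.s) → π w = 0 := by
    intro w hnt ⟨i0, hi0⟩
    rw [hπ]; dsimp only
    have h1 : (∏ i, sInd (w i)) = 0 := by
      refine Finset.prod_eq_zero (mem_univ i0) ?_
      simp [hsInd, hi0]
    have h2 : ∀ j, β j * ∏ i, F j i (w i) = 0 := by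
      intro j
      by_cases hx : w j = NodeState.x
      · have hcard : 1 < (univ.filter fun i => w i = NodeState.x).card := by
          have hmem : j ∈ univ.filter fun i => w i = NodeState.x := by simp [hx]
          have : 0 < (univ.filter fun i => w i = NodeState.x).card :=
            Finset.card_pos.mpr ⟨j, hmem⟩
          rcases Nat.lt_or_ge 1 (univ.filter fun i => w i = NodeState.x).card with h | h
          · exact h
          · exact absurd (by unfold numTransmit; omega : numTransmit w = 1) hnt
        obtain ⟨a, ha, b, hb, hab⟩ := Finset.one_lt_card.mp hcard
        simp only [Finset.mem_filter] at ha hb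
        have : ∃ t, t ≠ j ∧ w t = NodeState.x := by
          by_cases haj : a = j
          · exact ⟨b, by rw [← haj]; exact fun hbj => hab hbj.symm, hb.2⟩
          · exact ⟨a, haj, ha.2⟩
        obtain ⟨t, htj, htx⟩ := this
        have : F j t (w t) = 0 := by simp [hF, hg, htj, htx]
        rw [Finset.prod_eq_zero (mem_univ t) this, mul_zero]
      · have : F j j (w j) = 0 := by simp [hF, hx]
        rw [Finset.prod_eq_zero (mem_univ j) this, mul_zero]
    rw [h1, zero_mul, zero_add, Finset.sum_eq_zero fun j _ => h2 j]
  have hsupp : ∀ w ∉ CF N, π w = 0 := by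
    intro w hw
    rw [mem_CF] at hw
    push_neg at hw
    have hnt : numTransmit w ≠ 1 := by omega
    have hex : ∃ i, w i ≠ NodeState.s := by
      have : 0 < (univ.filter fun i => w i = NodeState.x).card := by
        unfold numTransmit at hw; omega
      obtain ⟨i, hi⟩ := Finset.card_pos.mp this
      simp only [Finset.mem_filter] at hi
      exact ⟨i, by rw [hi.2]; simp⟩
    exact hπzero w hnt hex
  -- the key marginal computation
  have key : ∀ (i : Fin N) (c : NodeState → ℝ),
      ∑ w : NetState N, c (w i) * π w
        = c .s * (1 - ∑ j, β j)
          + ∑ j, β j * (c .s * F j i .s + c .l * F j i .l + c .x * F j i .x) := by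
    intro i c
    have expand : ∀ w : NetState N, c (w i) * π w
        = (c (w i) * ∏ i', (fun (_ : Fin N) => sInd) i' (w i')) * (1 - ∑ j, β j)
          + ∑ j, β j * (c (w i) * ∏ i', F j i' (w i')) := by
      intro w
      rw [hπ]; dsimp only
      rw [mul_add, Finset.mul_sum]
      congr 1
      · ring
      · exact Finset.sum_congr rfl fun j _ => by ring
    rw [Finset.sum_congr rfl fun w _ => expand w, Finset.sum_add_distrib, ← Finset.sum_mul,
      sum_cond_mul_prod _ i c hsIndsum]
    congr 1
    · simp [hsInd]
    · rw [Finset.sum_comm]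
      refine Finset.sum_congr rfl fun j _ => ?_
      rw [← Finset.mul_sum, sum_cond_mul_prod _ i c (hFsum j)]
  -- marginals over CF-filters
  have filter_marg : ∀ (i : Fin N) (a0 : NodeState),
      ∑ w ∈ (CF N).filter (fun w => w i = a0), π w
        = ∑ w : NetState N, (if w i = a0 then (1:ℝ) else 0) * π w := by
    intro i a0
    rw [Finset.sum_subset (Finset.filter_subset_filter _ (Finset.subset_univ (CF N)))
      (fun w hw1 hw2 => ?_)]
    · rw [Finset.sum_filter]
      exact Finset.sum_congr rfl fun w _ => by split <;> simp
    · simp only [Finset.mem_filter] at hw1 hw2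
      exact hsupp w fun hc => hw2 ⟨hc, hw1.2⟩
  have Fvall : ∀ j i : Fin N, F j i .l = if i = j then 0 else p i := by
    intro j i; by_cases hij : i = j <;> simp [hF, hg, hij]
  have Fvalx : ∀ j i : Fin N, F j i .x = if i = j then 1 else 0 := by
    intro j i; by_cases hij : i = j <;> simp [hF, hg, hij]
  have margl : ∀ i, ∑ w ∈ (CF N).filter (fun w => w i = NodeState.l), π w = α i := by
    intro i
    rw [filter_marg i NodeState.l, key i (fun a => if a = NodeState.l then (1:ℝ) else 0)]
    simp only [Fvall]
    norm_num
    have h1 : NodeState.s ≠ NodeState.l := fun h => by cases h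
    have h2 : NodeState.x ≠ NodeState.l := fun h => by cases h
    simp only [if_neg h1, if_neg h2, zero_add, add_zero]
    rw [← Finset.add_sum_erase _ (fun j => β j * (if i = j then 0 else p i)) (mem_univ i)]
    rw [if_pos rfl, mul_zero, zero_add]
    have h3 : ∀ j ∈ univ.erase i, β j * (if i = j then 0 else p i) = β j * p i := fun j hj => by
      rw [if_neg (fun hc => (Finset.mem_erase.mp hj).1 hc.symm)]
    rw [Finset.sum_congr rfl h3, ← Finset.sum_mul, mul_comm]
    exact hpD i
  have margx : ∀ i, ∑ w ∈ (CF N).filter (fun w => w i = NodeState.x), π w = β i := by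
    intro i
    rw [filter_marg i NodeState.x, key i (fun a => if a = NodeState.x then (1:ℝ) else 0)]
    simp only [Fvalx]
    norm_num
    have h1 : NodeState.s ≠ NodeState.x := fun h => by cases h
    have h2 : NodeState.l ≠ NodeState.x := fun h => by cases h
    simp only [if_neg h1, if_neg h2, zero_add, add_zero]
    simp only [mul_ite, mul_one, mul_zero]
    rw [Finset.sum_ite_eq]
    simp
  have hsum1 : ∑ w ∈ CF N, π w = 1 := by
    have i0 : Fin N := ⟨0, by omega⟩
    rw [Finset.sum_subset (Finset.subset_univ (CF N)) (fun w _ hw => hsupp w hw)]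
    have : ∀ w : NetState N, π w = (fun (_ : NodeState) => (1:ℝ)) (w i0) * π w := by
      intro w; simp
    rw [Finset.sum_congr rfl fun w _ => this w, key i0 (fun _ => 1)]
    have : ∀ j, β j * (1 * F j i0 .s + 1 * F j i0 .l + 1 * F j i0 .x) = β j := by
      intro j
      rw [show (1:ℝ) * F j i0 NodeState.s + 1 * F j i0 NodeState.l + 1 * F j i0 NodeState.x
          = F j i0 NodeState.s + F j i0 NodeState.l + F j i0 NodeState.x by ring, hFsum j i0,
        mul_one]
    rw [Finset.sum_congr rfl fun j _ => this j]
    ring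
  refine ⟨π, ⟨hπ0, hsupp, hsum1, ?_⟩, ?_⟩
  · intro i
    rw [margl i, margx i]
    exact hpow i
  · -- value
    have step1 : ∑ w ∈ CF N, π w * (nu w * (numListen w : ℝ))
        = ∑ w ∈ CF N, π w * (numListen w : ℝ) := by
      refine Finset.sum_congr rfl fun w hw => ?_
      by_cases hnt : numTransmit w = 1
      · rw [nu, if_pos hnt, one_mul]
      · rw [nu, if_neg hnt]
        by_cases hall : ∀ i, w i = NodeState.s
        · have : numListen w = 0 := by
            rw [numListen, Finset.card_eq_zero, Finset.filter_eq_empty_iff]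
            intro i _
            rw [hall i]; simp
          rw [this]; simp
        · push_neg at hall
          rw [hπzero w hnt hall]; ring
    rw [step1]
    have step2 : ∀ w ∈ CF N, π w * (numListen w : ℝ)
        = π w * ∑ i, (if w i = NodeState.l then (1:ℝ) else 0) := by
      intro w _
      rw [numListen_cast]
    rw [Finset.sum_congr rfl step2, ← swap_helper π univ (fun i w => w i = NodeState.l)]
    exact Finset.sum_congr rfl fun i _ => margl i

/-- The optimal value of (P1) with the groupput state throughput
`T_w = ν_w · c_w` equals the optimal value of (P2). -/
theorem oracle_groupput_eq_P2 (N : ℕ) (hN : 2 ≤ N) (L X ρ : Fin N → ℝ)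
    (hL : ∀ i, 0 < L i) (hX : ∀ i, 0 < X i) (hρ : ∀ i, 0 < ρ i) :
    sSup {v : ℝ | ∃ π : NetState N → ℝ, P1Feasible N L X ρ π ∧
        v = ∑ w ∈ CF N, π w * (nu w * (numListen w : ℝ))}
      = sSup {v : ℝ | ∃ α β : Fin N → ℝ, P2Feasible N L X ρ α β ∧ v = ∑ i, α i} := by
  congr 1
  ext v
  simp only [Set.mem_setOf_eq]
  constructor
  · rintro ⟨π, hπ, rfl⟩
    obtain ⟨α, β, hfeas, hval⟩ := P1_to_P2 L X ρ hL hX π hπ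
    exact ⟨α, β, hfeas, hval⟩
  · rintro ⟨α, β, hfeas, rfl⟩
    obtain ⟨π, hπ, hval⟩ := P2_to_P1 hN L X ρ α β hfeas
    exact ⟨π, hπ, hval.symm⟩
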